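/- Let H be a nonempty planar axis-aligned region and let ℓ : ℝ² → ℝ be a bilinear function, i.e. ℓ(x₁,x₂) = a + b x₁ + c x₂ + d x₁x₂ for some reals a,b,c,d. Then for every x ∈ H, the point (x, ℓ(x)) ∈ ℝ³ lies in the convex hull of the finite set {(v, ℓ(v)) : v ∈ corner(H)}. -/

import Mathlib

open Set

/-! ### Auxiliary lemmas -/

private lemma padded_sum {M : Type*} [AddCommMonoid M] {m n : ℕ} (hmn : m ≤ n) (g : ℕ → M)
    (hg : ∀ i, m ≤ i → g i = 0) :
    ∑ i : Fin n, g (i : ℕ) = ∑ i ∈ Finset.range m, g i := by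
  rw [Fin.sum_univ_eq_sum_range]
  exact (Finset.sum_subset (Finset.range_subset_range.2 hmn)
    (fun x _ hx => hg x (le_of_not_gt (by simpa using hx)))).symm

/-- The convex hull of a compact nonempty set in a finite-dimensional normed space is compact. -/
private lemma isCompact_convexHull' {E : Type*} [NormedAddCommGroup E] [NormedSpace ℝ E]
    [FiniteDimensional ℝ E] {S : Set E} (hS : IsCompact S) (hne : S.Nonempty) :
    IsCompact (convexHull ℝ S) := by
  classical
  obtain ⟨s₀, hs₀⟩ := hne
  set n := Module.finrank ℝ E + 1 with hn
  have hfc : Continuous (fun p : (Fin n → ℝ) × (Fin n → E) => ∑ i : Fin n, p.1 i • p.2 i) := by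
    apply continuous_finset_sum
    intro i _
    exact ((continuous_apply i).comp continuous_fst).smul
      ((continuous_apply i).comp continuous_snd)
  have himg : (fun p : (Fin n → ℝ) × (Fin n → E) => ∑ i : Fin n, p.1 i • p.2 i) ''
      ((stdSimplex ℝ (Fin n)) ×ˢ (Set.univ.pi fun _ : Fin n => S)) = convexHull ℝ S := by
    apply subset_antisymm
    · rintro x ⟨⟨w, z⟩, ⟨⟨hw0, hw1⟩, hz⟩, rfl⟩
      exact (convex_convexHull ℝ S).sum_mem (fun i _ => hw0 i) hw1
        (fun i _ => subset_convexHull ℝ S (hz i (Set.mem_univ i)))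
    · intro x hx
      obtain ⟨ι, hι, z, w, hrange, hai, hpos, hsum, hcomb⟩ :=
        eq_pos_convex_span_of_mem_convexHull hx
      letI := hι
      have hcard : Fintype.card ι ≤ n :=
        le_trans hai.card_le_finrank_succ (Nat.add_le_add_right (Submodule.finrank_le _) 1)
      set m := Fintype.card ι with hm
      set e : Fin m ≃ ι := (Fintype.equivFin ι).symm with he
      set W : ℕ → ℝ := fun i => if h : i < m then w (e ⟨i, h⟩) else 0 with hW
      set Z : ℕ → E := fun i => if h : i < m then z (e ⟨i, h⟩) else s₀ with hZ
      have hWz : ∀ i, m ≤ i → W i = 0 := fun i hi => dif_neg (not_lt.2 hi)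
      refine ⟨(fun i : Fin n => W i, fun i : Fin n => Z i), ⟨⟨fun i => ?_, ?_⟩, fun i _ => ?_⟩, ?_⟩
      · by_cases h : (i : ℕ) < m
        · show (0:ℝ) ≤ W i
          rw [hW]; dsimp only; rw [dif_pos h]; exact (hpos _).le
        · show (0:ℝ) ≤ W i
          rw [hW]; dsimp only; rw [dif_neg h]
      · show ∑ i : Fin n, W i = 1
        calc ∑ i : Fin n, W i = ∑ i ∈ Finset.range m, W i := padded_sum hcard W hWz
          _ = ∑ j : Fin m, W j := (Fin.sum_univ_eq_sum_range W m).symm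
          _ = ∑ j : Fin m, w (e j) := by
              refine Finset.sum_congr rfl fun j _ => ?_
              rw [hW]; dsimp only; rw [dif_pos j.isLt]
          _ = ∑ i, w i := Equiv.sum_comp e w
          _ = 1 := hsum
      · show Z i ∈ S
        rw [hZ]; dsimp only; split
        · exact hrange ⟨_, rfl⟩
        · exact hs₀
      · show ∑ i : Fin n, W i • Z i = x
        calc ∑ i : Fin n, W i • Z i = ∑ i ∈ Finset.range m, W i • Z i :=
              padded_sum hcard (fun i => W i • Z i) (fun i hi => by show W i • Z i = 0; rw [hWz i hi, zero_smul])
          _ = ∑ j : Fin m, W j • Z j := (Fin.sum_univ_eq_sum_range _ m).symm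
          _ = ∑ j : Fin m, w (e j) • z (e j) := by
              refine Finset.sum_congr rfl fun j _ => ?_
              rw [hW, hZ]; dsimp only; simp only [dif_pos j.isLt]
          _ = ∑ i, w i • z i := Equiv.sum_comp e (fun i => w i • z i)
          _ = x := hcomb
  rw [← himg]
  exact ((isCompact_stdSimplex _ _).prod (isCompact_univ_pi fun _ => hS)).image hfc

private lemma mem_extremePoints_Icc_left {m M : ℝ} (h : m ≤ M) :
    m ∈ Set.extremePoints ℝ (Set.Icc m M) := by
  refine ⟨Set.left_mem_Icc.2 h, fun x₁ hx₁ x₂ hx₂ hm => ?_⟩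
  obtain ⟨p, q, hp, hq, hpq, hcomb⟩ := hm
  simp only [smul_eq_mul] at hcomb
  have h1 : p * (x₁ - m) + q * (x₂ - m) = 0 := by linear_combination hcomb - m * hpq
  have h2 : 0 ≤ p * (x₁ - m) := mul_nonneg hp.le (by linarith [hx₁.1])
  have h3 : 0 ≤ q * (x₂ - m) := mul_nonneg hq.le (by linarith [hx₂.1])
  have h4 : x₁ - m = 0 := by
    rcases mul_eq_zero.1 (by linarith : p * (x₁ - m) = 0) with h | h
    · exact absurd h hp.ne'
    · exact h
  have h5 : x₂ - m = 0 := by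
    rcases mul_eq_zero.1 (by linarith : q * (x₂ - m) = 0) with h | h
    · exact absurd h hq.ne'
    · exact h
  linarith

private lemma mem_extremePoints_Icc_right {m M : ℝ} (h : m ≤ M) :
    M ∈ Set.extremePoints ℝ (Set.Icc m M) := by
  refine ⟨Set.right_mem_Icc.2 h, fun x₁ hx₁ x₂ hx₂ hm => ?_⟩
  obtain ⟨p, q, hp, hq, hpq, hcomb⟩ := hm
  simp only [smul_eq_mul] at hcomb
  have h1 : p * (M - x₁) + q * (M - x₂) = 0 := by linear_combination M * hpq - hcomb
  have h2 : 0 ≤ p * (M - x₁) := mul_nonneg hp.le (by linarith [hx₁.2])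
  have h3 : 0 ≤ q * (M - x₂) := mul_nonneg hq.le (by linarith [hx₂.2])
  have h4 : M - x₁ = 0 := by
    rcases mul_eq_zero.1 (by linarith : p * (M - x₁) = 0) with h | h
    · exact absurd h hp.ne'
    · exact h
  have h5 : M - x₂ = 0 := by
    rcases mul_eq_zero.1 (by linarith : q * (M - x₂) = 0) with h | h
    · exact absurd h hq.ne'
    · exact h
  linarith

private lemma extremePoints_Icc_subset {m M x : ℝ}
    (hx : x ∈ Set.extremePoints ℝ (Set.Icc m M)) : x = m ∨ x = M := by
  obtain ⟨⟨h1, h2⟩, hext⟩ := hx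
  by_contra hcon
  push_neg at hcon
  have hm : m < x := h1.lt_of_ne (Ne.symm hcon.1)
  have hM : x < M := h2.lt_of_ne hcon.2
  have := hext (Set.left_mem_Icc.2 (h1.trans h2)) (Set.right_mem_Icc.2 (h1.trans h2))
    (by rw [openSegment_eq_Ioo (hm.trans hM)]; exact ⟨hm, hM⟩)
  exact hcon.1 this.symm

private lemma convexHull_eq_Icc {S : Set ℝ} (hc : IsCompact S) (hne : S.Nonempty) :
    convexHull ℝ S = Set.Icc (sInf S) (sSup S) := by
  have h1 : sInf S ∈ S := hc.sInf_mem hne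
  have h2 : sSup S ∈ S := hc.sSup_mem hne
  apply subset_antisymm
  · exact convexHull_min (fun x hx => ⟨csInf_le hc.bddBelow hx, le_csSup hc.bddAbove hx⟩)
      (convex_Icc _ _)
  · rw [← segment_eq_Icc (le_csSup hc.bddAbove h1)]
    exact (convex_convexHull ℝ S).segment_subset (subset_convexHull ℝ S h1)
      (subset_convexHull ℝ S h2)

private lemma graph_openSegment_horiz (a b c d : ℝ) (ℓ : ℝ × ℝ → ℝ)
    (hℓ : ∀ x : ℝ × ℝ, ℓ x = a + b * x.1 + c * x.2 + d * (x.1 * x.2))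
    {m M t : ℝ} (y : ℝ) (h1 : m < t) (h2 : t < M) :
    ((t, y, ℓ (t, y)) : ℝ × ℝ × ℝ) ∈
      openSegment ℝ ((m, y, ℓ (m, y)) : ℝ × ℝ × ℝ) ((M, y, ℓ (M, y)) : ℝ × ℝ × ℝ) := by
  have hMm : (0:ℝ) < M - m := by linarith
  have hne : M - m ≠ 0 := ne_of_gt hMm
  refine ⟨(M - t) / (M - m), (t - m) / (M - m), div_pos (by linarith) hMm,
    div_pos (by linarith) hMm, by field_simp; ring, ?_⟩
  simp only [Prod.smul_mk, Prod.mk_add_mk, smul_eq_mul, Prod.mk.injEq, hℓ]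
  refine ⟨by field_simp; ring, by field_simp; ring, by field_simp; ring⟩

private lemma graph_openSegment_vert (a b c d : ℝ) (ℓ : ℝ × ℝ → ℝ)
    (hℓ : ∀ x : ℝ × ℝ, ℓ x = a + b * x.1 + c * x.2 + d * (x.1 * x.2))
    {m M t : ℝ} (x : ℝ) (h1 : m < t) (h2 : t < M) :
    ((x, t, ℓ (x, t)) : ℝ × ℝ × ℝ) ∈
      openSegment ℝ ((x, m, ℓ (x, m)) : ℝ × ℝ × ℝ) ((x, M, ℓ (x, M)) : ℝ × ℝ × ℝ) := by
  have hMm : (0:ℝ) < M - m := by linarith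
  have hne : M - m ≠ 0 := ne_of_gt hMm
  refine ⟨(M - t) / (M - m), (t - m) / (M - m), div_pos (by linarith) hMm,
    div_pos (by linarith) hMm, by field_simp; ring, ?_⟩
  simp only [Prod.smul_mk, Prod.mk_add_mk, smul_eq_mul, Prod.mk.injEq, hℓ]
  refine ⟨by field_simp; ring, by field_simp; ring, by field_simp; ring⟩

section Slices

variable {H : Set (ℝ × ℝ)} {R : Finset ((ℝ × ℝ) × (ℝ × ℝ))}

private lemma hslice_compact
    (hHeq : H = ⋃ r ∈ R, Set.Icc r.1.1 r.2.1 ×ˢ Set.Icc r.1.2 r.2.2) (y : ℝ) :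
    IsCompact {x1 : ℝ | (x1, y) ∈ H} := by
  have hHcl : IsClosed H := by
    rw [hHeq]
    exact Set.Finite.isClosed_biUnion R.finite_toSet
      (fun r _ => isClosed_Icc.prod isClosed_Icc)
  have hcl : IsClosed {x1 : ℝ | (x1, y) ∈ H} :=
    hHcl.preimage (continuous_id.prodMk continuous_const)
  have hsub : {x1 : ℝ | (x1, y) ∈ H} ⊆ ⋃ r ∈ R, Set.Icc r.1.1 r.2.1 := by
    intro x hx
    rw [Set.mem_setOf_eq, hHeq] at hx
    simp only [Set.mem_iUnion, Set.mem_prod] at hx ⊢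
    obtain ⟨r, hr, hx1, _⟩ := hx
    exact ⟨r, hr, hx1⟩
  exact (R.isCompact_biUnion fun r _ => isCompact_Icc).of_isClosed_subset hcl hsub

private lemma vslice_compact
    (hHeq : H = ⋃ r ∈ R, Set.Icc r.1.1 r.2.1 ×ˢ Set.Icc r.1.2 r.2.2) (x : ℝ) :
    IsCompact {x2 : ℝ | (x, x2) ∈ H} := by
  have hHcl : IsClosed H := by
    rw [hHeq]
    exact Set.Finite.isClosed_biUnion R.finite_toSet
      (fun r _ => isClosed_Icc.prod isClosed_Icc)
  have hcl : IsClosed {x2 : ℝ | (x, x2) ∈ H} :=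
    hHcl.preimage (continuous_const.prodMk continuous_id)
  have hsub : {x2 : ℝ | (x, x2) ∈ H} ⊆ ⋃ r ∈ R, Set.Icc r.1.2 r.2.2 := by
    intro y hy
    rw [Set.mem_setOf_eq, hHeq] at hy
    simp only [Set.mem_iUnion, Set.mem_prod] at hy ⊢
    obtain ⟨r, hr, _, hy2⟩ := hy
    exact ⟨r, hr, hy2⟩
  exact (R.isCompact_biUnion fun r _ => isCompact_Icc).of_isClosed_subset hcl hsub

private lemma hslice_inf (hR : ∀ r ∈ R, r.1.1 ≤ r.2.1 ∧ r.1.2 ≤ r.2.2)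
    (hHeq : H = ⋃ r ∈ R, Set.Icc r.1.1 r.2.1 ×ˢ Set.Icc r.1.2 r.2.2) (y : ℝ)
    (hne : {x1 : ℝ | (x1, y) ∈ H}.Nonempty) :
    ∃ r ∈ R, sInf {x1 : ℝ | (x1, y) ∈ H} = r.1.1 := by
  have hc := hslice_compact hHeq y
  have hm : sInf {x1 : ℝ | (x1, y) ∈ H} ∈ {x1 : ℝ | (x1, y) ∈ H} := hc.sInf_mem hne
  have hm' : (sInf {x1 : ℝ | (x1, y) ∈ H}, y) ∈
      ⋃ r ∈ R, Set.Icc r.1.1 r.2.1 ×ˢ Set.Icc r.1.2 r.2.2 := by rw [← hHeq]; exact hm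
  simp only [Set.mem_iUnion, Set.mem_prod] at hm'
  obtain ⟨r, hr, hx1, hx2⟩ := hm'
  refine ⟨r, hr, le_antisymm (csInf_le hc.bddBelow ?_) hx1.1⟩
  show (r.1.1, y) ∈ H
  rw [hHeq]
  simp only [Set.mem_iUnion, Set.mem_prod]
  exact ⟨r, hr, Set.left_mem_Icc.2 (hR r hr).1, hx2⟩

private lemma hslice_sup (hR : ∀ r ∈ R, r.1.1 ≤ r.2.1 ∧ r.1.2 ≤ r.2.2)
    (hHeq : H = ⋃ r ∈ R, Set.Icc r.1.1 r.2.1 ×ˢ Set.Icc r.1.2 r.2.2) (y : ℝ)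
    (hne : {x1 : ℝ | (x1, y) ∈ H}.Nonempty) :
    ∃ r ∈ R, sSup {x1 : ℝ | (x1, y) ∈ H} = r.2.1 := by
  have hc := hslice_compact hHeq y
  have hm : sSup {x1 : ℝ | (x1, y) ∈ H} ∈ {x1 : ℝ | (x1, y) ∈ H} := hc.sSup_mem hne
  have hm' : (sSup {x1 : ℝ | (x1, y) ∈ H}, y) ∈
      ⋃ r ∈ R, Set.Icc r.1.1 r.2.1 ×ˢ Set.Icc r.1.2 r.2.2 := by rw [← hHeq]; exact hm
  simp only [Set.mem_iUnion, Set.mem_prod] at hm'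
  obtain ⟨r, hr, hx1, hx2⟩ := hm'
  refine ⟨r, hr, le_antisymm hx1.2 (le_csSup hc.bddAbove ?_)⟩
  show (r.2.1, y) ∈ H
  rw [hHeq]
  simp only [Set.mem_iUnion, Set.mem_prod]
  exact ⟨r, hr, Set.right_mem_Icc.2 (hR r hr).1, hx2⟩

private lemma vslice_inf (hR : ∀ r ∈ R, r.1.1 ≤ r.2.1 ∧ r.1.2 ≤ r.2.2)
    (hHeq : H = ⋃ r ∈ R, Set.Icc r.1.1 r.2.1 ×ˢ Set.Icc r.1.2 r.2.2) (x : ℝ)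
    (hne : {x2 : ℝ | (x, x2) ∈ H}.Nonempty) :
    ∃ r ∈ R, sInf {x2 : ℝ | (x, x2) ∈ H} = r.1.2 := by
  have hc := vslice_compact hHeq x
  have hm : sInf {x2 : ℝ | (x, x2) ∈ H} ∈ {x2 : ℝ | (x, x2) ∈ H} := hc.sInf_mem hne
  have hm' : (x, sInf {x2 : ℝ | (x, x2) ∈ H}) ∈
      ⋃ r ∈ R, Set.Icc r.1.1 r.2.1 ×ˢ Set.Icc r.1.2 r.2.2 := by rw [← hHeq]; exact hm
  simp only [Set.mem_iUnion, Set.mem_prod] at hm'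
  obtain ⟨r, hr, hx1, hx2⟩ := hm'
  refine ⟨r, hr, le_antisymm (csInf_le hc.bddBelow ?_) hx2.1⟩
  show (x, r.1.2) ∈ H
  rw [hHeq]
  simp only [Set.mem_iUnion, Set.mem_prod]
  exact ⟨r, hr, hx1, Set.left_mem_Icc.2 (hR r hr).2⟩

private lemma vslice_sup (hR : ∀ r ∈ R, r.1.1 ≤ r.2.1 ∧ r.1.2 ≤ r.2.2)
    (hHeq : H = ⋃ r ∈ R, Set.Icc r.1.1 r.2.1 ×ˢ Set.Icc r.1.2 r.2.2) (x : ℝ)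
    (hne : {x2 : ℝ | (x, x2) ∈ H}.Nonempty) :
    ∃ r ∈ R, sSup {x2 : ℝ | (x, x2) ∈ H} = r.2.2 := by
  have hc := vslice_compact hHeq x
  have hm : sSup {x2 : ℝ | (x, x2) ∈ H} ∈ {x2 : ℝ | (x, x2) ∈ H} := hc.sSup_mem hne
  have hm' : (x, sSup {x2 : ℝ | (x, x2) ∈ H}) ∈
      ⋃ r ∈ R, Set.Icc r.1.1 r.2.1 ×ˢ Set.Icc r.1.2 r.2.2 := by rw [← hHeq]; exact hm
  simp only [Set.mem_iUnion, Set.mem_prod] at hm'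
  obtain ⟨r, hr, hx1, hx2⟩ := hm'
  refine ⟨r, hr, le_antisymm hx2.2 (le_csSup hc.bddAbove ?_)⟩
  show (x, r.2.2) ∈ H
  rw [hHeq]
  simp only [Set.mem_iUnion, Set.mem_prod]
  exact ⟨r, hr, hx1, Set.right_mem_Icc.2 (hR r hr).2⟩

end Slices

/-- A planar axis-aligned region: a finite union of closed axis-aligned rectangles. -/
def IsPlanarAxisAligned (H : Set (ℝ × ℝ)) : Prop :=
  ∃ R : Finset ((ℝ × ℝ) × (ℝ × ℝ)),
    (∀ r ∈ R, r.1.1 ≤ r.2.1 ∧ r.1.2 ≤ r.2.2) ∧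
    H = ⋃ r ∈ R, Set.Icc r.1.1 r.2.1 ×ˢ Set.Icc r.1.2 r.2.2

/-- The corner points of a planar region `H`: points of `H` each of whose coordinates is an
extreme point of the convex hull of the corresponding axis-parallel slice of `H`. -/
def cornerSet (H : Set (ℝ × ℝ)) : Set (ℝ × ℝ) :=
  {v | v ∈ H ∧
    v.1 ∈ Set.extremePoints ℝ (convexHull ℝ {x1 : ℝ | (x1, v.2) ∈ H}) ∧
    v.2 ∈ Set.extremePoints ℝ (convexHull ℝ {x2 : ℝ | (v.1, x2) ∈ H})}

/-- For a bilinear function `ℓ` on a nonempty planar axis-aligned region `H`, every point of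
the graph of `ℓ` over `H` lies in the convex hull of the finite set of graph points over the
corner points of `H`. -/
theorem bilinear_graph_in_hull_of_corner_points
    (H : Set (ℝ × ℝ)) (hne : H.Nonempty) (hH : IsPlanarAxisAligned H)
    (a b c d : ℝ) (ℓ : ℝ × ℝ → ℝ)
    (hℓ : ∀ x : ℝ × ℝ, ℓ x = a + b * x.1 + c * x.2 + d * (x.1 * x.2)) :
    Set.Finite ((fun v : ℝ × ℝ => (v.1, v.2, ℓ v)) '' cornerSet H) ∧
    ∀ x ∈ H, (x.1, x.2, ℓ x) ∈
      convexHull ℝ ((fun v : ℝ × ℝ => (v.1, v.2, ℓ v)) '' cornerSet H) := by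
  classical
  obtain ⟨R, hR, hHeq⟩ := hH
  set g : ℝ × ℝ → ℝ × ℝ × ℝ := fun v => (v.1, v.2, ℓ v) with hg
  -- finiteness of the corner set
  have hfinC : (cornerSet H).Finite := by
    have hsub : cornerSet H ⊆
        (((fun r : (ℝ × ℝ) × (ℝ × ℝ) => r.1.1) '' (R : Set _) ∪
          (fun r : (ℝ × ℝ) × (ℝ × ℝ) => r.2.1) '' (R : Set _)) ×ˢ
         ((fun r : (ℝ × ℝ) × (ℝ × ℝ) => r.1.2) '' (R : Set _) ∪
          (fun r : (ℝ × ℝ) × (ℝ × ℝ) => r.2.2) '' (R : Set _))) := by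
      rintro v ⟨hvH, hv1, hv2⟩
      have hvH' : (v.1, v.2) ∈ H := by rwa [Prod.mk.eta]
      have hS1c := hslice_compact hHeq v.2
      have hS2c := vslice_compact hHeq v.1
      have hS1ne : {x1 : ℝ | (x1, v.2) ∈ H}.Nonempty := ⟨v.1, hvH'⟩
      have hS2ne : {x2 : ℝ | (v.1, x2) ∈ H}.Nonempty := ⟨v.2, hvH'⟩
      rw [convexHull_eq_Icc hS1c hS1ne] at hv1
      rw [convexHull_eq_Icc hS2c hS2ne] at hv2
      refine Set.mem_prod.2 ⟨?_, ?_⟩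
      · rcases extremePoints_Icc_subset hv1 with h | h
        · obtain ⟨r, hrR, hr⟩ := hslice_inf hR hHeq v.2 hS1ne
          exact Or.inl ⟨r, hrR, by show r.1.1 = v.1; rw [← hr, ← h]⟩
        · obtain ⟨r, hrR, hr⟩ := hslice_sup hR hHeq v.2 hS1ne
          exact Or.inr ⟨r, hrR, by show r.2.1 = v.1; rw [← hr, ← h]⟩
      · rcases extremePoints_Icc_subset hv2 with h | h
        · obtain ⟨r, hrR, hr⟩ := vslice_inf hR hHeq v.1 hS2ne
          exact Or.inl ⟨r, hrR, by show r.1.2 = v.2; rw [← hr, ← h]⟩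
        · obtain ⟨r, hrR, hr⟩ := vslice_sup hR hHeq v.1 hS2ne
          exact Or.inr ⟨r, hrR, by show r.2.2 = v.2; rw [← hr, ← h]⟩
    exact Set.Finite.subset
      (Set.Finite.prod
        ((R.finite_toSet.image _).union (R.finite_toSet.image _))
        ((R.finite_toSet.image _).union (R.finite_toSet.image _))) hsub
  refine ⟨hfinC.image _, ?_⟩
  intro x hx
  -- compactness facts
  have hHcpt : IsCompact H := by
    rw [hHeq]
    exact R.finite_toSet.isCompact_biUnion fun r _ => isCompact_Icc.prod isCompact_Icc
  have hℓc : Continuous ℓ := by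
    have : ℓ = fun x : ℝ × ℝ => a + b * x.1 + c * x.2 + d * (x.1 * x.2) := funext hℓ
    rw [this]; fun_prop
  have hgc : Continuous g := by
    rw [hg]; fun_prop
  have hScpt : IsCompact (g '' H) := hHcpt.image hgc
  have hSne : (g '' H).Nonempty := hne.image g
  have hCcpt : IsCompact (convexHull ℝ (g '' H)) := isCompact_convexHull' hScpt hSne
  -- extreme points of the hull are corner graph points
  have hext : Set.extremePoints ℝ (convexHull ℝ (g '' H)) ⊆ g '' cornerSet H := by
    intro e he
    obtain ⟨v, hvH, rfl⟩ := extremePoints_convexHull_subset he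
    have hgv : g v = ((v.1, v.2, ℓ (v.1, v.2)) : ℝ × ℝ × ℝ) := rfl
    refine ⟨v, ⟨hvH, ?_, ?_⟩, rfl⟩
    · -- first coordinate
      have hS1c := hslice_compact hHeq v.2
      have hv1S : v.1 ∈ {x1 : ℝ | (x1, v.2) ∈ H} := by
        show (v.1, v.2) ∈ H; rwa [Prod.mk.eta]
      have hS1ne : {x1 : ℝ | (x1, v.2) ∈ H}.Nonempty := ⟨v.1, hv1S⟩
      rw [convexHull_eq_Icc hS1c hS1ne]
      have hmle : sInf {x1 : ℝ | (x1, v.2) ∈ H} ≤ v.1 := csInf_le hS1c.bddBelow hv1S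
      have hMle : v.1 ≤ sSup {x1 : ℝ | (x1, v.2) ∈ H} := le_csSup hS1c.bddAbove hv1S
      have hmem : ∀ t, t ∈ {x1 : ℝ | (x1, v.2) ∈ H} →
          g (t, v.2) ∈ convexHull ℝ (g '' H) := fun t ht =>
        subset_convexHull ℝ _ ⟨(t, v.2), ht, rfl⟩
      rcases eq_or_lt_of_le hmle with h | hlt
      · rw [← h]; exact mem_extremePoints_Icc_left (hmle.trans hMle)
      rcases eq_or_lt_of_le hMle with h' | hlt'
      · rw [h']; exact mem_extremePoints_Icc_right (hmle.trans hMle)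
      exfalso
      have hm := hS1c.sInf_mem hS1ne
      have hM := hS1c.sSup_mem hS1ne
      have hseg := graph_openSegment_horiz a b c d ℓ hℓ v.2 hlt hlt'
      have heq := he.2 (hmem _ hm) (hmem _ hM) (by rw [hgv]; exact hseg)
      have : sInf {x1 : ℝ | (x1, v.2) ∈ H} = v.1 := by
        have := congrArg Prod.fst heq
        simpa [hg] using this
      exact absurd this (ne_of_lt hlt)
    · -- second coordinate
      have hS2c := vslice_compact hHeq v.1
      have hv2S : v.2 ∈ {x2 : ℝ | (v.1, x2) ∈ H} := by
        show (v.1, v.2) ∈ H; rwa [Prod.mk.eta]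
      have hS2ne : {x2 : ℝ | (v.1, x2) ∈ H}.Nonempty := ⟨v.2, hv2S⟩
      rw [convexHull_eq_Icc hS2c hS2ne]
      have hmle : sInf {x2 : ℝ | (v.1, x2) ∈ H} ≤ v.2 := csInf_le hS2c.bddBelow hv2S
      have hMle : v.2 ≤ sSup {x2 : ℝ | (v.1, x2) ∈ H} := le_csSup hS2c.bddAbove hv2S
      have hmem : ∀ t, t ∈ {x2 : ℝ | (v.1, x2) ∈ H} →
          g (v.1, t) ∈ convexHull ℝ (g '' H) := fun t ht =>
        subset_convexHull ℝ _ ⟨(v.1, t), ht, rfl⟩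
      rcases eq_or_lt_of_le hmle with h | hlt
      · rw [← h]; exact mem_extremePoints_Icc_left (hmle.trans hMle)
      rcases eq_or_lt_of_le hMle with h' | hlt'
      · rw [h']; exact mem_extremePoints_Icc_right (hmle.trans hMle)
      exfalso
      have hm := hS2c.sInf_mem hS2ne
      have hM := hS2c.sSup_mem hS2ne
      have hseg := graph_openSegment_vert a b c d ℓ hℓ v.1 hlt hlt'
      have heq := he.2 (hmem _ hm) (hmem _ hM) (by rw [hgv]; exact hseg)
      have : sInf {x2 : ℝ | (v.1, x2) ∈ H} = v.2 := by
        have := congrArg (fun p : ℝ × ℝ × ℝ => p.2.1) heq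
        simpa [hg] using this
      exact absurd this (ne_of_lt hlt)
  -- Krein-Milman
  have hKM := closure_convexHull_extremePoints hCcpt (convex_convexHull ℝ (g '' H))
  have hclosed : IsClosed (convexHull ℝ (g '' cornerSet H)) :=
    (hfinC.image g).isClosed_convexHull ℝ
  have step : closure (convexHull ℝ (Set.extremePoints ℝ (convexHull ℝ (g '' H)))) ⊆
      convexHull ℝ (g '' cornerSet H) :=
    (closure_mono (convexHull_mono hext)).trans hclosed.closure_eq.subset
  have hin : g x ∈ convexHull ℝ (g '' H) := subset_convexHull ℝ _ ⟨x, hx, rfl⟩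
  exact step (by rw [hKM]; exact hin)
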